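/- Let L² := L²([0,∞); ℝⁿ) and L₂e the space of measurable functions u : [0,∞) → ℝⁿ with P_T u ∈ L² for all T > 0, where P_T truncates a function to zero on [T, ∞). Suppose (i) H₁, H₂ : L² → L² are causal (P_T ∘ Hᵢ ∘ P_T = P_T ∘ Hᵢ for all T > 0) and have finite gain with zero offset (‖Hᵢ(u)‖ ≤ γᵢ‖u‖ for some γᵢ > 0 and all u ∈ L²); (ii) for all τ ∈ (0, 1], the feedback interconnection [H₁, τH₂] is well-posed (for every u ∈ L₂e there exist unique e, y ∈ L₂e with e = u − τH₂(y), y = H₁(e), where H₁, H₂ are extended causally to L₂e) and the resulting map u ↦ y on L₂e is causal; (iii) there exists γ > 0 such that for all τ ∈ [0, 1] and all u₁, u₂ in the domain of [H₁, τH₂] (as a relation on L² × L²), the outputs satisfy ‖y₁ − y₂‖ ≤ γ‖u₁ − u₂‖. Then [H₁, H₂] maps all of L² to L² and has finite incremental gain. -/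

import Mathlib

/-!
**Statement 12** (Non-incremental homotopy with well-posedness).  Signals are functions
`ℝ → ℝⁿ` considered with respect to the measure `μ₀ = Lebesgue restricted to [0, ∞)`;
`L²` membership is `Memℒp · 2 μ₀`; the truncation `P_T` sets a function to zero on
`[T, ∞)`; the extended space membership `InL2e u` requires `P_T u ∈ L²` for all `T > 0`.
Operators act on functions and respect a.e. equality (so they descend to equivalence
classes).  `H₁e, H₂e` are the causal extensions of `H₁, H₂` to the extended space
(characterized by agreeing with `Hᵢ` on `L²` and the causal-extension property).
Under (i) causality and finite gain with zero offset of `H₁, H₂`;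
(ii) well-posedness and causality of the closed loop `[H₁, τH₂]` on the extended space
for all `τ ∈ (0, 1]`; and (iii) a uniform incremental bound `γ` on `[H₁, τH₂]` for
`τ ∈ [0, 1]`: the feedback interconnection `[H₁, H₂]` maps all of `L²` to `L²` and has
finite incremental gain.
-/

open MeasureTheory

noncomputable section

variable {n : ℕ}

/-- `ℝⁿ`. -/
abbrev En (n : ℕ) := EuclideanSpace ℝ (Fin n)

/-- Lebesgue measure restricted to `[0, ∞)`. -/
def mu0 : Measure ℝ := volume.restrict (Set.Ici 0)

/-- Truncation `P_T`: sets a signal to zero on `[T, ∞)`. -/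
def trunc (T : ℝ) (u : ℝ → En n) : ℝ → En n := Set.indicator (Set.Iio T) u

/-- `L²` membership. -/
def InL2 (u : ℝ → En n) : Prop := MemLp u 2 mu0

/-- Extended-space membership: every truncation is in `L²`. -/
def InL2e (u : ℝ → En n) : Prop := ∀ T > 0, InL2 (trunc T u)

/-- Membership in the feedback relation `[H₁, τH₂]` on `L² × L²`: there is a unique
(up to a.e. equality) error signal `e ∈ L²` with `e = u - τ H₂ y` and `y = H₁ e`. -/
def FbMem (H₁ H₂ : (ℝ → En n) → (ℝ → En n)) (τ : ℝ) (u y : ℝ → En n) : Prop :=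
  InL2 u ∧ InL2 y ∧ ∃ e, InL2 e ∧ e =ᵐ[mu0] u - τ • H₂ y ∧ y =ᵐ[mu0] H₁ e ∧
    ∀ e', InL2 e' → e' =ᵐ[mu0] u - τ • H₂ y → y =ᵐ[mu0] H₁ e' → e' =ᵐ[mu0] e

section Aux

open Filter
open scoped ENNReal

lemma trunc_apply (T : ℝ) (u : ℝ → En n) (t : ℝ) :
    trunc T u t = if t < T then u t else 0 := by
  simp [trunc, Set.indicator_apply, Set.mem_Iio]

lemma inL2_trunc {u : ℝ → En n} (T : ℝ) (hu : InL2 u) : InL2 (trunc T u) :=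
  hu.indicator measurableSet_Iio

lemma inL2e_of_inL2 {u : ℝ → En n} (hu : InL2 u) : InL2e u :=
  fun T _ => inL2_trunc T hu

lemma trunc_trunc (S T : ℝ) (u : ℝ → En n) :
    trunc S (trunc T u) = trunc (min S T) u := by
  funext t
  simp only [trunc_apply, lt_min_iff]
  split_ifs with h1 h2 h3 <;> simp_all

lemma inL2e_trunc {u : ℝ → En n} (T : ℝ) (hT : 0 < T) (hu : InL2e u) :
    InL2e (trunc T u) := by
  intro S hS
  rw [trunc_trunc]
  exact hu _ (lt_min hS hT)

lemma trunc_sub (T : ℝ) (u v : ℝ → En n) :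
    trunc T (u - v) = trunc T u - trunc T v := by
  funext t
  simp only [Pi.sub_apply, trunc_apply]
  split_ifs <;> simp

lemma trunc_smul (T : ℝ) (c : ℝ) (u : ℝ → En n) :
    trunc T (c • u) = c • trunc T u := by
  funext t
  simp only [Pi.smul_apply, trunc_apply]
  split_ifs <;> simp

lemma inL2e_sub {u v : ℝ → En n} (hu : InL2e u) (hv : InL2e v) : InL2e (u - v) := by
  intro T hT
  rw [trunc_sub]
  exact (hu T hT).sub (hv T hT)

lemma inL2e_smul {u : ℝ → En n} (c : ℝ) (hu : InL2e u) : InL2e (c • u) := by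
  intro T hT
  rw [trunc_smul]
  exact (hu T hT).const_smul c

lemma trunc_congr {u v : ℝ → En n} (T : ℝ) (h : u =ᵐ[mu0] v) :
    trunc T u =ᵐ[mu0] trunc T v := by
  filter_upwards [h] with t ht
  simp [trunc_apply, ht]

lemma sub_smul_split (u b : ℝ → En n) (τ δ : ℝ) :
    u - (τ + δ) • b = (u - δ • b) - τ • b := by
  funext t
  simp only [Pi.sub_apply, Pi.smul_apply, Pi.add_apply, add_smul]
  abel

lemma inL2_of_trunc_bound {y : ℝ → En n} (hy : InL2e y) (B : ℝ≥0∞) (hB : B ≠ ⊤)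
    (h : ∀ T > (0 : ℝ), eLpNorm (trunc T y) 2 mu0 ≤ B) :
    InL2 y ∧ eLpNorm y 2 mu0 ≤ B := by
  set f : ℕ → ℝ → En n := fun k => trunc (k + 1 : ℝ) y with hf
  have hfm : ∀ k, AEStronglyMeasurable (f k) mu0 := fun k =>
    (hy (k + 1 : ℝ) (by positivity)).1
  have hlim : ∀ t, Tendsto (fun k => f k t) atTop (nhds (y t)) := by
    intro t
    apply tendsto_const_nhds.congr'
    filter_upwards [eventually_ge_atTop ⌈t⌉₊] with k hk
    have ht : t < (k : ℝ) + 1 := by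
      have h1 : t ≤ (⌈t⌉₊ : ℝ) := Nat.le_ceil t
      have h2 : ((⌈t⌉₊ : ℕ) : ℝ) ≤ (k : ℝ) := by exact_mod_cast hk
      linarith
    simp [hf, trunc_apply, ht]
  have hsm : AEStronglyMeasurable y mu0 :=
    aestronglyMeasurable_of_tendsto_ae atTop hfm (Eventually.of_forall hlim)
  have hle : eLpNorm y 2 mu0 ≤ B := by
    refine le_trans (Lp.eLpNorm_lim_le_liminf_eLpNorm hfm y (Eventually.of_forall hlim)) ?_
    calc atTop.liminf (fun k => eLpNorm (f k) 2 mu0)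
        ≤ atTop.liminf (fun _ : ℕ => B) := by
          refine liminf_le_liminf (Eventually.of_forall fun k => ?_)
          exact h (k + 1 : ℝ) (by positivity)
      _ = B := liminf_const B
  exact ⟨⟨hsm, lt_of_le_of_lt hle hB.lt_top⟩, hle⟩

end Aux

theorem non_incremental_homotopy
    (H₁ H₂ H₁e H₂e : (ℝ → En n) → (ℝ → En n))
    -- `H₁, H₂` are operators on `L²` (preserving `L²` and a.e. equality)
    (hmap₁ : ∀ u, InL2 u → InL2 (H₁ u)) (hmap₂ : ∀ u, InL2 u → InL2 (H₂ u))
    (hae₁ : ∀ u v, InL2 u → InL2 v → u =ᵐ[mu0] v → H₁ u =ᵐ[mu0] H₁ v)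
    (hae₂ : ∀ u v, InL2 u → InL2 v → u =ᵐ[mu0] v → H₂ u =ᵐ[mu0] H₂ v)
    -- (i) `H₁, H₂` are causal …
    (hc₁ : ∀ T > 0, ∀ u, InL2 u → trunc T (H₁ (trunc T u)) =ᵐ[mu0] trunc T (H₁ u))
    (hc₂ : ∀ T > 0, ∀ u, InL2 u → trunc T (H₂ (trunc T u)) =ᵐ[mu0] trunc T (H₂ u))
    -- … and have finite gain with zero offset
    (hg₁ : ∃ γ₁ : ℝ, 0 < γ₁ ∧ ∀ u, InL2 u →
      eLpNorm (H₁ u) 2 mu0 ≤ ENNReal.ofReal γ₁ * eLpNorm u 2 mu0)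
    (hg₂ : ∃ γ₂ : ℝ, 0 < γ₂ ∧ ∀ u, InL2 u →
      eLpNorm (H₂ u) 2 mu0 ≤ ENNReal.ofReal γ₂ * eLpNorm u 2 mu0)
    -- `H₁e, H₂e` are the causal extensions of `H₁, H₂` to the extended space
    (hext₁ : (∀ u, InL2e u → InL2e (H₁e u)) ∧ (∀ u, InL2 u → H₁e u =ᵐ[mu0] H₁ u) ∧
      (∀ T > 0, ∀ u, InL2e u → trunc T (H₁e u) =ᵐ[mu0] trunc T (H₁e (trunc T u))))
    (hext₂ : (∀ u, InL2e u → InL2e (H₂e u)) ∧ (∀ u, InL2 u → H₂e u =ᵐ[mu0] H₂ u) ∧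
      (∀ T > 0, ∀ u, InL2e u → trunc T (H₂e u) =ᵐ[mu0] trunc T (H₂e (trunc T u))))
    -- (ii) the feedback interconnection `[H₁, τH₂]` is well-posed on the extended space…
    (hwp : ∀ τ ∈ Set.Ioc (0 : ℝ) 1, ∀ u, InL2e u → ∃ e y, InL2e e ∧ InL2e y ∧
      e =ᵐ[mu0] u - τ • H₂e y ∧ y =ᵐ[mu0] H₁e e ∧
      ∀ e' y', InL2e e' → InL2e y' → e' =ᵐ[mu0] u - τ • H₂e y' → y' =ᵐ[mu0] H₁e e' →
        e' =ᵐ[mu0] e ∧ y' =ᵐ[mu0] y)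
    -- … and the resulting map `u ↦ y` on the extended space is causal
    (hclcausal : ∀ τ ∈ Set.Ioc (0 : ℝ) 1, ∀ T > 0, ∀ u e y e' y',
      InL2e u → InL2e e → InL2e y →
      e =ᵐ[mu0] u - τ • H₂e y → y =ᵐ[mu0] H₁e e →
      InL2e e' → InL2e y' →
      e' =ᵐ[mu0] trunc T u - τ • H₂e y' → y' =ᵐ[mu0] H₁e e' →
      trunc T y' =ᵐ[mu0] trunc T y)
    -- (iii) a uniform incremental bound along the homotopy path
    (γ : ℝ) (hγ : 0 < γ)
    (hbound : ∀ τ ∈ Set.Icc (0 : ℝ) 1, ∀ u₁ y₁ u₂ y₂,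
      FbMem H₁ H₂ τ u₁ y₁ → FbMem H₁ H₂ τ u₂ y₂ →
      eLpNorm (y₁ - y₂) 2 mu0 ≤ ENNReal.ofReal γ * eLpNorm (u₁ - u₂) 2 mu0) :
    -- conclusion: `[H₁, H₂]` maps all of `L²` to `L²` and has finite incremental gain
    (∀ u, InL2 u → ∃ y, FbMem H₁ H₂ 1 u y) ∧
    (∃ γ' : ℝ, ∀ u₁ y₁ u₂ y₂,
      FbMem H₁ H₂ 1 u₁ y₁ → FbMem H₁ H₂ 1 u₂ y₂ →
      eLpNorm (y₁ - y₂) 2 mu0 ≤ ENNReal.ofReal γ' * eLpNorm (u₁ - u₂) 2 mu0) := by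
  obtain ⟨γ₁, hγ₁, hg₁'⟩ := hg₁
  obtain ⟨γ₂, hγ₂, hg₂'⟩ := hg₂
  obtain ⟨hext₁m, hext₁a, hext₁c⟩ := hext₁
  obtain ⟨hext₂m, hext₂a, hext₂c⟩ := hext₂
  have hzero : InL2 (0 : ℝ → En n) := ⟨aestronglyMeasurable_const, by simp⟩
  have hH₁0 : H₁ (0 : ℝ → En n) =ᵐ[mu0] 0 := by
    have h := hg₁' 0 hzero
    rw [eLpNorm_zero, mul_zero] at h
    exact (eLpNorm_eq_zero_iff (hmap₁ 0 hzero).1 (by norm_num)).1 (le_antisymm h zero_le)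
  have hH₂0 : H₂ (0 : ℝ → En n) =ᵐ[mu0] 0 := by
    have h := hg₂' 0 hzero
    rw [eLpNorm_zero, mul_zero] at h
    exact (eLpNorm_eq_zero_iff (hmap₂ 0 hzero).1 (by norm_num)).1 (le_antisymm h zero_le)
  have hfb_zero : ∀ τ : ℝ, FbMem H₁ H₂ τ 0 0 := by
    intro τ
    have he0 : (0 : ℝ → En n) =ᵐ[mu0] (0 : ℝ → En n) - τ • H₂ 0 := by
      filter_upwards [hH₂0] with t ht
      simp [Pi.sub_apply, Pi.smul_apply, ht]
    exact ⟨hzero, hzero, 0, hzero, he0, hH₁0.symm, fun e' _ he' _ => he'.trans he0.symm⟩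
  have mk_fb : ∀ (τ : ℝ) (u y e : ℝ → En n), InL2 u → InL2 y → InL2 e →
      e =ᵐ[mu0] u - τ • H₂ y → y =ᵐ[mu0] H₁ e → FbMem H₁ H₂ τ u y :=
    fun τ u y e hu hy he h1 h2 =>
      ⟨hu, hy, e, he, h1, h2, fun e' _ he'1 _ => he'1.trans h1.symm⟩
  have apriori : ∀ τ ∈ Set.Icc (0:ℝ) 1, ∀ u y, FbMem H₁ H₂ τ u y →
      eLpNorm y 2 mu0 ≤ ENNReal.ofReal γ * eLpNorm u 2 mu0 := by
    intro τ hτ u y hfb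
    have h := hbound τ hτ u y 0 0 hfb (hfb_zero τ)
    simpa using h
  have step : ∀ τ δ : ℝ, 0 ≤ τ → 0 < δ → τ + δ ≤ 1 → γ * (δ * γ₂) < 1 →
      (∀ u, InL2 u → ∃ y, FbMem H₁ H₂ τ u y) →
      ∀ u, InL2 u → ∃ y, FbMem H₁ H₂ (τ + δ) u y := by
    intro τ δ hτ0 hδ0 hsum hsmall IH u hu
    obtain ⟨e, y, heE, hyE, heq, hyq, -⟩ :=
      hwp (τ + δ) ⟨by linarith, hsum⟩ u (inL2e_of_inL2 hu)
    set v : ℝ → En n := u - δ • H₂e y with hv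
    have hvE : InL2e v := inL2e_sub (inL2e_of_inL2 hu) (inL2e_smul δ (hext₂m y hyE))
    have heqv : e =ᵐ[mu0] v - τ • H₂e y := by
      rw [hv, ← sub_smul_split u (H₂e y) τ δ]; exact heq
    have key : ∀ T > (0:ℝ), ∃ yT, FbMem H₁ H₂ τ (trunc T v) yT ∧
        trunc T y =ᵐ[mu0] trunc T yT := by
      intro T hT
      have hvT : InL2 (trunc T v) := hvE T hT
      obtain ⟨yT, hfbT⟩ := IH (trunc T v) hvT
      obtain ⟨-, hyT2, e₀, he₀2, he₀, hyT0, -⟩ := hfbT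
      set eT : ℝ → En n := trunc T v - τ • H₂ yT with heTdef
      have heT2 : InL2 eT := hvT.sub ((hmap₂ yT hyT2).const_smul τ)
      have h₁e : H₁ e₀ =ᵐ[mu0] H₁ eT := hae₁ e₀ eT he₀2 heT2 he₀
      refine ⟨yT, ⟨hvT, hyT2, e₀, he₀2, he₀, hyT0, fun e' _ he' _ => he'.trans he₀.symm⟩, ?_⟩
      rcases eq_or_lt_of_le hτ0 with hτz | hτpos
      · -- τ = 0
        have hev : e =ᵐ[mu0] v := by
          refine heqv.trans ?_
          rw [← hτz]
          filter_upwards with t; simp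
        have h1 : trunc T y =ᵐ[mu0] trunc T (H₁e e) := trunc_congr T hyq
        have h2 : trunc T (H₁e e) =ᵐ[mu0] trunc T (H₁e (trunc T e)) := hext₁c T hT e heE
        have h3 : trunc T (H₁e (trunc T e)) =ᵐ[mu0] trunc T (H₁ (trunc T e)) :=
          trunc_congr T (hext₁a _ (heE T hT))
        have h4 : H₁ (trunc T e) =ᵐ[mu0] H₁ (trunc T v) :=
          hae₁ _ _ (heE T hT) hvT (trunc_congr T hev)
        have h5 : yT =ᵐ[mu0] H₁ (trunc T v) := by
          refine (hyT0.trans h₁e).trans ?_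
          have heq' : eT = trunc T v := by
            rw [heTdef, ← hτz]; funext t; simp
          rw [heq']
        exact ((h1.trans h2).trans h3).trans ((trunc_congr T h4).trans (trunc_congr T h5.symm))
      · -- τ > 0
        have heTeq : eT =ᵐ[mu0] trunc T v - τ • H₂e yT := by
          filter_upwards [hext₂a yT hyT2] with t ht
          simp [heTdef, Pi.sub_apply, Pi.smul_apply, ht]
        have hyTeq : yT =ᵐ[mu0] H₁e eT :=
          (hyT0.trans h₁e).trans (hext₁a eT heT2).symm
        exact (hclcausal τ ⟨hτpos, by linarith⟩ T hT v e y eT yT hvE heE hyE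
          heqv hyq (inL2e_of_inL2 heT2) (inL2e_of_inL2 hyT2) heTeq hyTeq).symm
    have Xfin : ∀ T > (0:ℝ), eLpNorm (trunc T y) 2 mu0 ≠ ⊤ := fun T hT => (hyE T hT).2.ne
    have keybd : ∀ T > (0:ℝ), eLpNorm (trunc T y) 2 mu0 ≤
        ENNReal.ofReal γ * (eLpNorm u 2 mu0
          + ENNReal.ofReal (δ * γ₂) * eLpNorm (trunc T y) 2 mu0) := by
      intro T hT
      obtain ⟨yT, hfbT, htr⟩ := key T hT
      have h3 := apriori τ ⟨hτ0, by linarith⟩ _ _ hfbT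
      have hH2y : eLpNorm (trunc T (H₂e y)) 2 mu0 ≤
          ENNReal.ofReal γ₂ * eLpNorm (trunc T y) 2 mu0 := by
        have e1 : trunc T (H₂e y) =ᵐ[mu0] trunc T (H₂ (trunc T y)) :=
          (hext₂c T hT y hyE).trans (trunc_congr T (hext₂a _ (hyE T hT)))
        calc eLpNorm (trunc T (H₂e y)) 2 mu0
            = eLpNorm (trunc T (H₂ (trunc T y))) 2 mu0 := eLpNorm_congr_ae e1
          _ ≤ eLpNorm (H₂ (trunc T y)) 2 mu0 := eLpNorm_indicator_le _
          _ ≤ ENNReal.ofReal γ₂ * eLpNorm (trunc T y) 2 mu0 := hg₂' _ (hyE T hT)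
      have hvt : eLpNorm (trunc T v) 2 mu0 ≤
          eLpNorm u 2 mu0 + ENNReal.ofReal (δ * γ₂) * eLpNorm (trunc T y) 2 mu0 := by
        have e2 : trunc T v = trunc T u - δ • trunc T (H₂e y) := by
          rw [hv, trunc_sub, trunc_smul]
        rw [e2]
        calc eLpNorm (trunc T u - δ • trunc T (H₂e y)) 2 mu0
            ≤ eLpNorm (trunc T u) 2 mu0 + eLpNorm (δ • trunc T (H₂e y)) 2 mu0 :=
              eLpNorm_sub_le (inL2_trunc T hu).1
                ((hext₂m y hyE T hT).const_smul δ).1 one_le_two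
          _ = eLpNorm (trunc T u) 2 mu0
              + ENNReal.ofReal δ * eLpNorm (trunc T (H₂e y)) 2 mu0 := by
              rw [eLpNorm_const_smul, Real.enorm_eq_ofReal hδ0.le]
          _ ≤ eLpNorm u 2 mu0 + ENNReal.ofReal δ *
              (ENNReal.ofReal γ₂ * eLpNorm (trunc T y) 2 mu0) := by
              gcongr
              · exact eLpNorm_indicator_le _
          _ = eLpNorm u 2 mu0 + ENNReal.ofReal (δ * γ₂) * eLpNorm (trunc T y) 2 mu0 := by
              rw [ENNReal.ofReal_mul hδ0.le, mul_assoc]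
      calc eLpNorm (trunc T y) 2 mu0 = eLpNorm (trunc T yT) 2 mu0 := eLpNorm_congr_ae htr
        _ ≤ eLpNorm yT 2 mu0 := eLpNorm_indicator_le _
        _ ≤ ENNReal.ofReal γ * eLpNorm (trunc T v) 2 mu0 := h3
        _ ≤ _ := mul_le_mul_right hvt _
    have hufin : eLpNorm u 2 mu0 ≠ ⊤ := hu.2.ne
    set U := (eLpNorm u 2 mu0).toReal with hU
    have h1γδ : 0 < 1 - γ * (δ * γ₂) := by linarith
    set C := γ * U / (1 - γ * (δ * γ₂)) with hC
    have hbd : ∀ T > (0:ℝ), eLpNorm (trunc T y) 2 mu0 ≤ ENNReal.ofReal C := by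
      intro T hT
      have h := keybd T hT
      have hXfin : eLpNorm (trunc T y) 2 mu0 ≠ ⊤ := Xfin T hT
      have hrhsfin : ENNReal.ofReal γ * (eLpNorm u 2 mu0
          + ENNReal.ofReal (δ * γ₂) * eLpNorm (trunc T y) 2 mu0) ≠ ⊤ := by
        apply ENNReal.mul_ne_top ENNReal.ofReal_ne_top
        exact ENNReal.add_ne_top.2 ⟨hufin, ENNReal.mul_ne_top ENNReal.ofReal_ne_top hXfin⟩
      have hx : (eLpNorm (trunc T y) 2 mu0).toReal ≤
          γ * (U + δ * γ₂ * (eLpNorm (trunc T y) 2 mu0).toReal) := by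
        have h' := ENNReal.toReal_mono hrhsfin h
        rw [ENNReal.toReal_mul, ENNReal.toReal_add hufin
            (ENNReal.mul_ne_top ENNReal.ofReal_ne_top hXfin),
          ENNReal.toReal_mul, ENNReal.toReal_ofReal hγ.le,
          ENNReal.toReal_ofReal (by positivity)] at h'
        exact h'
      have hxC : (eLpNorm (trunc T y) 2 mu0).toReal ≤ C := by
        rw [hC, le_div_iff₀ h1γδ]
        nlinarith [ENNReal.toReal_nonneg (a := eLpNorm (trunc T y) 2 mu0)]
      calc eLpNorm (trunc T y) 2 mu0
          = ENNReal.ofReal (eLpNorm (trunc T y) 2 mu0).toReal :=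
            (ENNReal.ofReal_toReal hXfin).symm
        _ ≤ ENNReal.ofReal C := ENNReal.ofReal_le_ofReal hxC
    obtain ⟨hyL2, -⟩ := inL2_of_trunc_bound hyE _ ENNReal.ofReal_ne_top hbd
    have heae : e =ᵐ[mu0] u - (τ + δ) • H₂ y := by
      refine heq.trans ?_
      filter_upwards [hext₂a y hyL2] with t ht
      simp [Pi.sub_apply, Pi.smul_apply, ht]
    have heL2 : InL2 e :=
      (hu.sub ((hmap₂ y hyL2).const_smul (τ + δ))).ae_eq heae.symm
    exact ⟨y, mk_fb (τ + δ) u y e hu hyL2 heL2 heae (hyq.trans (hext₁a e heL2))⟩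
  have base : ∀ u, InL2 u → ∃ y, FbMem H₁ H₂ 0 u y := by
    intro u hu
    refine ⟨H₁ u, mk_fb 0 u (H₁ u) u hu (hmap₁ u hu) hu ?_ Filter.EventuallyEq.rfl⟩
    filter_upwards with t; simp
  set N : ℕ := ⌈γ * γ₂⌉₊ + 1 with hN
  have hNpos : 0 < (N : ℝ) := by positivity
  have hNgt : γ * γ₂ < (N : ℝ) := by
    have h1 : γ * γ₂ ≤ (⌈γ * γ₂⌉₊ : ℝ) := Nat.le_ceil _
    have h2 : ((⌈γ * γ₂⌉₊ : ℕ) : ℝ) < (N : ℝ) := by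
      rw [hN]; push_cast; linarith
    linarith
  have hsmall : γ * (1 / (N:ℝ) * γ₂) < 1 := by
    have heq : γ * (1 / (N:ℝ) * γ₂) = γ * γ₂ / N := by ring
    rw [heq, div_lt_one hNpos]
    exact hNgt
  have ind : ∀ k : ℕ, k ≤ N → ∀ u, InL2 u → ∃ y, FbMem H₁ H₂ ((k : ℝ) / N) u y := by
    intro k
    induction k with
    | zero => intro _ u hu; simpa using base u hu
    | succ k ih =>
      intro hk u hu
      have hsum : (k:ℝ)/N + 1/(N:ℝ) ≤ 1 := by
        rw [← add_div, div_le_one hNpos]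
        exact_mod_cast hk
      obtain ⟨y, hy⟩ := step ((k:ℝ)/N) (1/(N:ℝ)) (by positivity) (by positivity)
        hsum hsmall (ih (le_of_lt (Nat.lt_of_succ_le hk))) u hu
      have harg : (((k+1 : ℕ)) : ℝ)/N = (k:ℝ)/N + 1/(N:ℝ) := by push_cast; ring
      rw [harg]
      exact ⟨y, hy⟩
  constructor
  · intro u hu
    have h := ind N le_rfl u hu
    rwa [div_self (ne_of_gt hNpos)] at h
  · exact ⟨γ, fun u₁ y₁ u₂ y₂ h1 h2 => hbound 1 ⟨zero_le_one, le_refl 1⟩ u₁ y₁ u₂ y₂ h1 h2⟩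

end
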